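/- Let a_i, b_i > 0, r_i positive integers, and w_n = b_1·(a_1 + b_2·(a_2 + ... + b_n·a_n^{1/r_n})...)^{1/r_1}. Then for every n ≥ 1, w_{n+1} - w_n ≤ (b_{n+1} · a_{n+1}^{1/r_{n+1}} · ∏_{i=1}^n b_i) / ∏_{i=1}^n (r_i · a_i^{(r_i-1)/r_i}). -/

import Mathlib

/-- `wrad a b r n i = b i * (a i + b (i+1) * (⋯ + b n * (a n) ^ (1/r n)) ^ (1/r (i+1))) ^ (1/r i)`;
the `n`-th approximant `w n` of the weighted continued radical is `wrad a b r n 1`. -/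
noncomputable def wrad (a b : ℕ → ℝ) (r : ℕ → ℕ) (n : ℕ) : ℕ → ℝ
  | i => if _ : i ≤ n then b i * (a i + wrad a b r n (i + 1)) ^ ((r i : ℝ)⁻¹) else 0
termination_by i => n + 1 - i
decreasing_by omega

/-- Bernoulli-type bound: `x^p - y^p ≤ p * y^(p-1) * (x-y)` for `0 < y ≤ x`, `0 ≤ p ≤ 1`. -/
lemma rpow_sub_rpow_le (x y p : ℝ) (hy : 0 < y) (hxy : y ≤ x) (hp0 : 0 ≤ p) (hp1 : p ≤ 1) :
    x ^ p - y ^ p ≤ p * y ^ (p - 1) * (x - y) := by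
  have hx : 0 < x := hy.trans_le hxy
  have hs : (0:ℝ) ≤ x / y - 1 := by
    rw [sub_nonneg, le_div_iff₀ hy, one_mul]; exact hxy
  have key : (1 + (x / y - 1)) ^ p ≤ 1 + p * (x / y - 1) :=
    rpow_one_add_le_one_add_mul_self (by linarith) hp0 hp1
  have hx_eq : x = y * (1 + (x / y - 1)) := by field_simp; ring
  calc x ^ p - y ^ p = y ^ p * (1 + (x / y - 1)) ^ p - y ^ p := by
        rw [← Real.mul_rpow hy.le (by linarith), ← hx_eq]
    _ ≤ y ^ p * (1 + p * (x / y - 1)) - y ^ p := by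
        have := mul_le_mul_of_nonneg_left key (Real.rpow_nonneg hy.le p)
        linarith
    _ = p * (y ^ p / y) * (x - y) := by
        have h : y ^ p * (x / y - 1) = (y ^ p / y) * (x - y) := by
          field_simp
        nlinarith [h]
    _ = p * y ^ (p - 1) * (x - y) := by
        rw [Real.rpow_sub hy, Real.rpow_one]

section

variable (a b : ℕ → ℝ) (r : ℕ → ℕ)
variable (ha : ∀ n, 1 ≤ n → 0 < a n) (hb : ∀ n, 1 ≤ n → 0 < b n) (hr : ∀ n, 1 ≤ r n)

include ha hb in
lemma wrad_nonneg (n i : ℕ) (hi : 1 ≤ i) : 0 ≤ wrad a b r n i := by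
  rw [wrad]
  split
  · have h1 : 0 ≤ wrad a b r n (i + 1) := wrad_nonneg n (i + 1) (by omega)
    have h2 : 0 < a i := ha i hi
    have h3 : 0 < b i := hb i hi
    positivity
  · exact le_rfl
termination_by n + 1 - i
decreasing_by omega

include ha hb in
lemma wrad_mono (n i : ℕ) (hi : 1 ≤ i) : wrad a b r n i ≤ wrad a b r (n + 1) i := by
  conv_lhs => rw [wrad]
  conv_rhs => rw [wrad]
  split
  · rename_i h
    rw [dif_pos (by omega : i ≤ n + 1)]
    have h1 : wrad a b r n (i + 1) ≤ wrad a b r (n + 1) (i + 1) :=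
      wrad_mono n (i + 1) (by omega)
    have h2 : 0 ≤ wrad a b r n (i + 1) := wrad_nonneg a b r ha hb n (i + 1) (by omega)
    have h3 : 0 < a i := ha i hi
    refine mul_le_mul_of_nonneg_left ?_ (hb i hi).le
    exact Real.rpow_le_rpow (by linarith) (by linarith) (by positivity)
  · split
    · rename_i h h'
      have h2 : 0 ≤ wrad a b r (n + 1) (i + 1) := wrad_nonneg a b r ha hb (n + 1) (i + 1) (by omega)
      have h3 : 0 < a i := ha i hi
      have h4 : 0 < b i := hb i hi
      positivity
    · exact le_rfl
termination_by n + 1 - i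
decreasing_by omega

include ha hb hr in
lemma wrad_main (n : ℕ) (hn : 1 ≤ n) (i : ℕ) (hi : 1 ≤ i) (hin : i ≤ n + 1) :
    wrad a b r (n + 1) i - wrad a b r n i ≤
      (b (n + 1) * (a (n + 1)) ^ ((r (n + 1) : ℝ)⁻¹) * ∏ j ∈ Finset.Icc i n, b j) /
        ∏ j ∈ Finset.Icc i n, (r j : ℝ) * (a j) ^ (((r j : ℝ) - 1) / (r j : ℝ)) := by
  rcases eq_or_lt_of_le hin with heq | hlt
  · subst heq
    rw [Finset.Icc_eq_empty (by omega), Finset.prod_empty, Finset.prod_empty, mul_one, div_one]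
    rw [wrad, dif_pos (le_refl _), wrad, dif_neg (by omega), wrad, dif_neg (by omega),
      add_zero, sub_zero]
  · have hiN : i ≤ n := by omega
    have hrec := wrad_main n hn (i + 1) (by omega) (by omega)
    set p : ℝ := ((r i : ℝ))⁻¹ with hp
    have hri : (1:ℝ) ≤ (r i : ℝ) := by exact_mod_cast hr i
    have hp0 : 0 < p := by positivity
    have hp1 : p ≤ 1 := inv_le_one_of_one_le₀ hri
    have hai : 0 < a i := ha i hi
    have hbi : 0 < b i := hb i hi
    set Y : ℝ := a i + wrad a b r n (i + 1) with hY
    set X : ℝ := a i + wrad a b r (n + 1) (i + 1) with hX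
    have hYpos : 0 < Y := by
      have := wrad_nonneg a b r ha hb n (i + 1) (by omega)
      rw [hY]; linarith
    have hXY : Y ≤ X := by
      have := wrad_mono a b r ha hb n (i + 1) (by omega)
      rw [hY, hX]; linarith
    have hw1 : wrad a b r (n + 1) i = b i * X ^ p := by
      rw [wrad, dif_pos (by omega : i ≤ n + 1)]
    have hw2 : wrad a b r n i = b i * Y ^ p := by
      rw [wrad, dif_pos hiN]
    have hkey : X ^ p - Y ^ p ≤ p * Y ^ (p - 1) * (X - Y) :=
      rpow_sub_rpow_le X Y p hYpos hXY hp0.le hp1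
    have haY : Y ^ (p - 1) ≤ (a i) ^ (p - 1) := by
      refine Real.rpow_le_rpow_of_nonpos hai ?_ (by linarith)
      have := wrad_nonneg a b r ha hb n (i + 1) (by omega)
      rw [hY]; linarith
    have hXYd : X - Y = wrad a b r (n + 1) (i + 1) - wrad a b r n (i + 1) := by
      rw [hX, hY]; ring
    -- products
    have hIcc : Finset.Icc i n = insert i (Finset.Icc (i + 1) n) := by
      ext x; simp only [Finset.mem_Icc, Finset.mem_insert]; omega
    have hnotmem : i ∉ Finset.Icc (i + 1) n := by simp
    set C : ℝ := b (n + 1) * (a (n + 1)) ^ ((r (n + 1) : ℝ)⁻¹) with hC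
    set PB : ℝ := ∏ j ∈ Finset.Icc (i + 1) n, b j with hPB
    set PD : ℝ := ∏ j ∈ Finset.Icc (i + 1) n, (r j : ℝ) * (a j) ^ (((r j : ℝ) - 1) / (r j : ℝ))
      with hPD
    have hPBpos : 0 < PB := Finset.prod_pos fun j hj => hb j (by
      simp only [Finset.mem_Icc] at hj; omega)
    have hPDpos : 0 < PD := Finset.prod_pos fun j hj => by
      have hj' : 1 ≤ j := by simp only [Finset.mem_Icc] at hj; omega
      have := ha j hj'
      have : (0:ℝ) < r j := by exact_mod_cast hr j
      positivity
    have hCpos : 0 < C := by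
      have := hb (n + 1) (by omega)
      have := ha (n + 1) (by omega)
      positivity
    have hrecPos : 0 ≤ C * PB / PD := by positivity
    have hstep : wrad a b r (n + 1) i - wrad a b r n i ≤
        b i * (p * (a i) ^ (p - 1)) * (C * PB / PD) := by
      rw [hw1, hw2, ← mul_sub]
      calc b i * (X ^ p - Y ^ p) ≤ b i * (p * Y ^ (p - 1) * (X - Y)) :=
            mul_le_mul_of_nonneg_left hkey hbi.le
        _ ≤ b i * (p * (a i) ^ (p - 1) * (X - Y)) := by
            refine mul_le_mul_of_nonneg_left ?_ hbi.le
            refine mul_le_mul_of_nonneg_right (by nlinarith [Real.rpow_nonneg hai.le (p-1)]) ?_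
            linarith
        _ ≤ b i * (p * (a i) ^ (p - 1) * (C * PB / PD)) := by
            refine mul_le_mul_of_nonneg_left ?_ hbi.le
            refine mul_le_mul_of_nonneg_left ?_ (by positivity)
            rw [hXYd]; exact hrec
        _ = b i * (p * (a i) ^ (p - 1)) * (C * PB / PD) := by ring
    refine hstep.trans_eq ?_
    rw [hIcc, Finset.prod_insert hnotmem, Finset.prod_insert hnotmem, ← hPB, ← hPD]
    have hq : p - 1 = -(((r i : ℝ) - 1) / (r i : ℝ)) := by
      rw [hp]; field_simp; ring
    rw [hq, Real.rpow_neg hai.le]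
    have hden : (0:ℝ) < (a i) ^ (((r i : ℝ) - 1) / (r i : ℝ)) := by positivity
    rw [hp]
    field_simp
termination_by n + 1 - i
decreasing_by omega

end

theorem weighted_polya_szego (a b : ℕ → ℝ) (r : ℕ → ℕ)
    (ha : ∀ n, 1 ≤ n → 0 < a n) (hb : ∀ n, 1 ≤ n → 0 < b n)
    (hr : ∀ n, 1 ≤ r n) :
    ∀ n, 1 ≤ n →
      wrad a b r (n + 1) 1 - wrad a b r n 1 ≤
        (b (n + 1) * (a (n + 1)) ^ ((r (n + 1) : ℝ)⁻¹) * ∏ i ∈ Finset.Icc 1 n, b i) /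
          ∏ i ∈ Finset.Icc 1 n,
            (r i : ℝ) * (a i) ^ (((r i : ℝ) - 1) / (r i : ℝ)) := fun n hn =>
  wrad_main a b r ha hb hr n hn 1 le_rfl (by omega)
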